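/- Let S = S_{P_0,P}(M) be a generalized q-polymatroid port, V ∈ Γ (a reconstructing space) and W ∈ A (a privacy space) with W ≤ V, and Y ≤ P with W ⊕ Y = V. Then ρ(P_0) ≤ ρ(Y); consequently the information ratio σ(S) = max_{1-dim p ≤ P} ρ(p) / ρ(P_0) satisfies σ(S) ≥ 1/g(S), where g(S) is the minimum of dim(V/W) over pairs W < V with V ∈ Γ, W ∈ A. -/

import Mathlib

open Module

variable {K E : Type} [Field K] [Fintype K] [AddCommGroup E] [Module K E]
  [FiniteDimensional K E]

lemma span_finset_bound
    (ρ : Submodule K E → ℚ)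
    (hbdd : ∀ V : Submodule K E, 0 ≤ ρ V ∧ ρ V ≤ (finrank K V : ℚ))
    (hsubmod : ∀ V W : Submodule K E, ρ (V ⊔ W) + ρ (V ⊓ W) ≤ ρ V + ρ W)
    (P : Submodule K E) (σmax : ℚ) (hσ : 0 ≤ σmax)
    (hub : ∀ p : Submodule K E, p ≤ P → finrank K p = 1 → ρ p ≤ σmax) :
    ∀ s : Finset E, (↑s : Set E) ⊆ (P : Set E) →
      ρ (Submodule.span K (↑s : Set E)) ≤ (s.card : ℚ) * σmax := by
  classical
  intro s
  induction s using Finset.induction_on with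
  | empty =>
      intro _
      simp only [Finset.coe_empty, Submodule.span_empty, Finset.card_empty,
        Nat.cast_zero, zero_mul]
      have := (hbdd ⊥).2
      simpa using this
  | @insert a s ha ih =>
      intro hsub
      have haP : a ∈ P := hsub (by simp)
      have hsP : (↑s : Set E) ⊆ (P : Set E) := by
        intro x hx; exact hsub (by simp [hx])
      have hspan : Submodule.span K (↑(insert a s) : Set E)
          = Submodule.span K {a} ⊔ Submodule.span K (↑s : Set E) := by
        rw [Finset.coe_insert, Set.insert_eq, Submodule.span_union]
      have h1 : ρ (Submodule.span K {a}) ≤ σmax := by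
        by_cases h0 : a = 0
        · subst h0
          simp only [Submodule.span_zero_singleton]
          have := (hbdd ⊥).2
          have : ρ (⊥ : Submodule K E) ≤ 0 := by simpa using this
          linarith
        · exact hub _ (by rw [Submodule.span_le]; simpa using haP)
            (finrank_span_singleton h0)
      have h2 := hsubmod (Submodule.span K {a}) (Submodule.span K (↑s : Set E))
      have h3 := (hbdd (Submodule.span K {a} ⊓ Submodule.span K (↑s : Set E))).1
      have h4 := ih hsP
      have hcard : ((insert a s).card : ℚ) = (s.card : ℚ) + 1 := by
        rw [Finset.card_insert_of_notMem ha]; push_cast; ring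
      rw [hspan, hcard]
      nlinarith

lemma rho_le_finrank_mul
    (ρ : Submodule K E → ℚ)
    (hbdd : ∀ V : Submodule K E, 0 ≤ ρ V ∧ ρ V ≤ (finrank K V : ℚ))
    (hsubmod : ∀ V W : Submodule K E, ρ (V ⊔ W) + ρ (V ⊓ W) ≤ ρ V + ρ W)
    (P : Submodule K E) (σmax : ℚ) (hσ : 0 ≤ σmax)
    (hub : ∀ p : Submodule K E, p ≤ P → finrank K p = 1 → ρ p ≤ σmax)
    (Y : Submodule K E) (hYP : Y ≤ P) :
    ρ Y ≤ (finrank K Y : ℚ) * σmax := by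
  classical
  obtain ⟨b⟩ := Basis.exists_basis K Y
  -- use finBasis
  set n := finrank K Y with hn
  let bb := Module.finBasis K Y
  let g : Fin n → E := fun i => (bb i : E)
  have hgY : ∀ i, g i ∈ Y := fun i => (bb i).2
  have hspan : Submodule.span K (Set.range g) = Y := by
    have h1 : Submodule.span K (Set.range bb) = ⊤ := bb.span_eq
    have : Submodule.map Y.subtype (Submodule.span K (Set.range bb))
        = Submodule.span K (Set.range g) := by
      rw [Submodule.map_span]
      congr 1
      ext x
      simp [g, Set.range_comp, Submodule.subtype]
      exact Iff.rfl
    rw [h1, Submodule.map_top, Submodule.range_subtype] at this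
    exact this.symm
  set s : Finset E := Finset.image g Finset.univ with hs
  have hscoe : (↑s : Set E) = Set.range g := by
    simp [hs]
  have hsub : (↑s : Set E) ⊆ (P : Set E) := by
    rw [hscoe]; rintro x ⟨i, rfl⟩; exact hYP (hgY i)
  have := span_finset_bound ρ hbdd hsubmod P σmax hσ hub s hsub
  rw [hscoe, hspan] at this
  have hcard' : s.card ≤ n := by
    simpa using Finset.card_image_le (s := (Finset.univ : Finset (Fin n))) (f := g)
  have hcard : (s.card : ℚ) ≤ (n : ℚ) := by exact_mod_cast hcard'
  nlinarith

lemma exists_compl_in (W V : Submodule K E) (h : W ≤ V) :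
    ∃ Y : Submodule K E, Y ≤ V ∧ W ⊓ Y = ⊥ ∧ W ⊔ Y = V := by
  let W' : Submodule K V := W.comap V.subtype
  obtain ⟨Y', hY'⟩ := Submodule.exists_isCompl W'
  refine ⟨Y'.map V.subtype, Submodule.map_subtype_le V Y', ?_, ?_⟩
  · have hW : W'.map V.subtype = W := by
      rw [Submodule.map_comap_subtype, inf_eq_right.2 h]
    have hinj : Function.Injective V.subtype := Submodule.injective_subtype V
    calc W ⊓ Y'.map V.subtype = (W' ⊓ Y').map V.subtype := by
          rw [Submodule.map_inf _ hinj, hW]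
      _ = ⊥ := by rw [hY'.inf_eq_bot, Submodule.map_bot]
  · have hW : W'.map V.subtype = W := by
      rw [Submodule.map_comap_subtype, inf_eq_right.2 h]
    calc W ⊔ Y'.map V.subtype = (W' ⊔ Y').map V.subtype := by
          rw [Submodule.map_sup, hW]
      _ = V := by rw [hY'.sup_eq_top, Submodule.map_top, Submodule.range_subtype]

/-- for a generalized `q`-polymatroid port with `V ∈ Γ`, `W ∈ A`, `W ⊕ Y = V`,
one has `ρ(P₀) ≤ ρ(Y)`; consequently the information ratio `σ(S) = max_p ρ(p)/ρ(P₀)`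
satisfies `σ(S) ≥ 1/g(S)`, i.e. `1/dim(V/W) ≤ σ(S)` for every admissible pair `W < V`. -/
theorem port_secret_le_share_and_information_ratio
    (ρ : Submodule K E → ℚ)
    (hbdd : ∀ V : Submodule K E, 0 ≤ ρ V ∧ ρ V ≤ (finrank K V : ℚ))
    (hmono : ∀ V W : Submodule K E, V ≤ W → ρ V ≤ ρ W)
    (hsubmod : ∀ V W : Submodule K E, ρ (V ⊔ W) + ρ (V ⊓ W) ≤ ρ V + ρ W)
    (P₀ P : Submodule K E) (hdisj : P₀ ⊓ P = ⊥) (hspan : P₀ ⊔ P = ⊤)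
    (hP₀ : 0 < ρ P₀)
    -- `σmax` is the maximum of `ρ(p)` over one-dimensional subspaces `p ≤ P`
    (σmax : ℚ)
    (hub : ∀ p : Submodule K E, p ≤ P → finrank K p = 1 → ρ p ≤ σmax)
    (hatt : ∃ p : Submodule K E, p ≤ P ∧ finrank K p = 1 ∧ ρ p = σmax) :
    (∀ V W Y : Submodule K E, V ≤ P → W ≤ P → Y ≤ P →
        ρ (P₀ ⊔ V) = ρ V →                 -- V ∈ Γ
        ρ (P₀ ⊔ W) - ρ W = ρ P₀ →          -- W ∈ A
        W ⊓ Y = ⊥ → W ⊔ Y = V →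
        ρ P₀ ≤ ρ Y)
    ∧ (∀ V W : Submodule K E, V ≤ P → W ≤ P →
        ρ (P₀ ⊔ V) = ρ V →                 -- V ∈ Γ
        ρ (P₀ ⊔ W) - ρ W = ρ P₀ →          -- W ∈ A
        W < V →
        1 / ((finrank K V : ℚ) - (finrank K W : ℚ)) ≤ σmax / ρ P₀) := by
  have hσ : 0 ≤ σmax := by
    obtain ⟨p, _, _, hp⟩ := hatt
    exact hp ▸ (hbdd p).1
  have part1 : ∀ V W Y : Submodule K E, V ≤ P → W ≤ P → Y ≤ P →
      ρ (P₀ ⊔ V) = ρ V → ρ (P₀ ⊔ W) - ρ W = ρ P₀ →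
      W ⊓ Y = ⊥ → W ⊔ Y = V → ρ P₀ ≤ ρ Y := by
    intro V W Y _ _ _ hΓ hA hWY hsup
    have hWV : W ≤ V := hsup ▸ le_sup_left
    have h1 : ρ (P₀ ⊔ W) ≤ ρ (P₀ ⊔ V) :=
      hmono _ _ (sup_le_sup_left hWV _)
    have h2 := hsubmod W Y
    rw [hsup, hWY] at h2
    have h3 : (0 : ℚ) ≤ ρ ⊥ := (hbdd ⊥).1
    linarith [hΓ ▸ h1]
  refine ⟨part1, ?_⟩
  intro V W hVP hWP hΓ hA hlt
  obtain ⟨Y, hYV, hWY, hsup⟩ := exists_compl_in W V hlt.le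
  have hYP : Y ≤ P := hYV.trans hVP
  have hle : ρ P₀ ≤ ρ Y := part1 V W Y hVP hWP hYP hΓ hA hWY hsup
  have hrk : finrank K W + finrank K Y = finrank K V := by
    have := Submodule.finrank_sup_add_finrank_inf_eq W Y
    rw [hsup, hWY] at this
    simpa using this.symm
  have hYbound : ρ Y ≤ (finrank K Y : ℚ) * σmax :=
    rho_le_finrank_mul ρ hbdd hsubmod P σmax hσ hub Y hYP
  have hd : (0 : ℚ) < (finrank K V : ℚ) - (finrank K W : ℚ) := by
    have : finrank K W < finrank K V := Submodule.finrank_lt_finrank_of_lt hlt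
    have := Nat.cast_lt (α := ℚ) |>.2 this
    linarith
  have hYrk : (finrank K Y : ℚ) = (finrank K V : ℚ) - (finrank K W : ℚ) := by
    have : ((finrank K W : ℚ)) + (finrank K Y : ℚ) = (finrank K V : ℚ) := by
      exact_mod_cast hrk
    linarith
  rw [div_le_div_iff₀ hd hP₀]
  rw [hYrk] at hYbound
  nlinarith
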